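/- Let X be a real Banach space and let c ≥ 1. If X has the c-strong Schur property, then X is (2c+1)-Schur. -/

import Mathlib

open scoped BigOperators
open Filter

/-- `ca` of a real sequence: `inf_n sup {|t_k - t_l| : k, l ≥ n}`. -/
noncomputable def caSeqR (t : ℕ → ℝ) : ℝ :=
  sInf {s | ∃ n : ℕ, s = sSup {u | ∃ k, n ≤ k ∧ ∃ l, n ≤ l ∧ u = |t k - t l|}}

/-- `ca` of a sequence in a normed space: `inf_n diam {x_k : k ≥ n}`. -/
noncomputable def caSeq {X : Type*} [NormedAddCommGroup X] (x : ℕ → X) : ℝ :=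
  sInf {s | ∃ n : ℕ, s = Metric.diam (x '' Set.Ici n)}

/-- `de` of a sequence: `sup {ca((x*(x_n))_n) : x* ∈ B_{X*}}`. -/
noncomputable def deSeq {X : Type*} [NormedAddCommGroup X] [NormedSpace ℝ X]
    (x : ℕ → X) : ℝ :=
  sSup {t | ∃ φ : X →L[ℝ] ℝ, ‖φ‖ ≤ 1 ∧ t = caSeqR fun n => φ (x n)}

/-- `wca(x_n) = inf {ca((x_{n_k})_k) : (n_k) strictly increasing}`. -/
noncomputable def wcaSeq {X : Type*} [NormedAddCommGroup X] (x : ℕ → X) : ℝ :=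
  sInf {t | ∃ n : ℕ → ℕ, StrictMono n ∧ t = caSeq (x ∘ n)}

/-- `wde(x_n) = inf {de((x_{n_k})_k) : (n_k) strictly increasing}`. -/
noncomputable def wdeSeq {X : Type*} [NormedAddCommGroup X] [NormedSpace ℝ X]
    (x : ℕ → X) : ℝ :=
  sInf {t | ∃ n : ℕ → ℕ, StrictMono n ∧ t = deSeq (x ∘ n)}

/-- A real normed space is `c`-Schur if `ca(x_n) ≤ c · de(x_n)` for every bounded
sequence `(x_n)`. -/
def IsCSchur (X : Type*) [NormedAddCommGroup X] [NormedSpace ℝ X] (c : ℝ) : Prop :=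
  ∀ x : ℕ → X, (∃ C : ℝ, ∀ n, ‖x n‖ ≤ C) → caSeq x ≤ c * deSeq x

/-- A real normed space has the `c`-strong Schur property if every normalized
`δ`-separated sequence admits a subsequence `(2c/δ + ε)`-equivalent to the unit
vector basis of `ℓ¹`. -/
def HasCStrongSchur (X : Type*) [NormedAddCommGroup X] [NormedSpace ℝ X] (c : ℝ) : Prop :=
  ∀ δ : ℝ, 0 < δ → δ ≤ 2 → ∀ ε : ℝ, 0 < ε → ∀ x : ℕ → X,
    (∀ n, ‖x n‖ = 1) → (∀ n m, n ≠ m → δ ≤ ‖x n - x m‖) →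
    ∃ n : ℕ → ℕ, StrictMono n ∧ ∀ (N : ℕ) (a : ℕ → ℝ),
      (2 * c / δ + ε)⁻¹ * ∑ k ∈ Finset.range N, |a k| ≤
        ‖∑ k ∈ Finset.range N, a k • x (n k)‖

lemma key_finset {X : Type*} [NormedAddCommGroup X] [NormedSpace ℝ X]
    (v : ℕ → X) (K : ℝ)
    (hl1 : ∀ (N : ℕ) (a : ℕ → ℝ), K * ∑ k ∈ Finset.range N, |a k| ≤
      ‖∑ k ∈ Finset.range N, a k • v k‖) :
    ∀ (s : Finset ℕ) (g : ℕ → ℝ), K * ∑ i ∈ s, |g i| ≤ ‖∑ i ∈ s, g i • v i‖ := by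
  intro s g
  set Nb := s.sup id + 1 with hNb
  have hsub : s ⊆ Finset.range Nb := by
    intro i hi
    exact Finset.mem_range.mpr (Nat.lt_succ_of_le (Finset.le_sup (f := id) hi))
  have h1 : ∑ i ∈ Finset.range Nb, |if i ∈ s then g i else 0| = ∑ i ∈ s, |g i| := by
    rw [← Finset.sum_subset hsub (fun i _ hi => by rw [if_neg hi, abs_zero])]
    exact Finset.sum_congr rfl fun i hi => by rw [if_pos hi]
  have h2 : ∑ i ∈ Finset.range Nb, (if i ∈ s then g i else 0) • v i = ∑ i ∈ s, g i • v i := by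
    rw [← Finset.sum_subset hsub (fun i _ hi => by rw [if_neg hi, zero_smul])]
    exact Finset.sum_congr rfl fun i hi => by rw [if_pos hi]
  calc K * ∑ i ∈ s, |g i| = K * ∑ i ∈ Finset.range Nb, |if i ∈ s then g i else 0| := by rw [h1]
    _ ≤ ‖∑ i ∈ Finset.range Nb, (if i ∈ s then g i else 0) • v i‖ := hl1 Nb _
    _ = ‖∑ i ∈ s, g i • v i‖ := by rw [h2]

lemma exists_functional {X : Type*} [NormedAddCommGroup X] [NormedSpace ℝ X]
    (v : ℕ → X) (K : ℝ) (hK : 0 < K)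
    (hl1 : ∀ (N : ℕ) (a : ℕ → ℝ), K * ∑ k ∈ Finset.range N, |a k| ≤
      ‖∑ k ∈ Finset.range N, a k • v k‖) :
    ∃ g : X →L[ℝ] ℝ, ‖g‖ ≤ 1 ∧ ∀ k, g (v k) = K := by
  have key := key_finset v K hl1
  have hli : LinearIndependent ℝ v := by
    rw [linearIndependent_iff']
    intro s g hsum i hi
    have h0 : K * ∑ i ∈ s, |g i| ≤ 0 := by
      have := key s g
      rw [hsum, norm_zero] at this
      exact this
    have hS : ∑ i ∈ s, |g i| = 0 := by
      have h1 : ∑ i ∈ s, |g i| ≤ 0 := nonpos_of_mul_nonpos_right (by linarith) hK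
      exact le_antisymm h1 (Finset.sum_nonneg fun i _ => abs_nonneg _)
    have := (Finset.sum_eq_zero_iff_of_nonneg (fun i _ => abs_nonneg (g i))).mp hS i hi
    exact abs_eq_zero.mp this
  set p := Submodule.span ℝ (Set.range v) with hp
  let B : Module.Basis ℕ ℝ p := Module.Basis.span hli
  let f₀ : p →ₗ[ℝ] ℝ := B.constr ℝ (fun _ => K)
  have hbound : ∀ z : p, ‖f₀ z‖ ≤ 1 * ‖z‖ := by
    intro z
    have hz : ∑ i ∈ (B.repr z).support, B.repr z i • B i = z := by
      conv_rhs => rw [← B.linearCombination_repr z]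
      rw [Finsupp.linearCombination_apply, Finsupp.sum]
    set F := B.repr z with hF
    have hfz : f₀ z = ∑ i ∈ F.support, F i * K := by
      conv_lhs => rw [← hz]
      rw [map_sum]
      exact Finset.sum_congr rfl fun i _ => by
        rw [map_smul, Module.Basis.constr_basis]; rfl
    have hcz : (z : X) = ∑ i ∈ F.support, F i • v i := by
      conv_lhs => rw [← hz]
      push_cast
      exact Finset.sum_congr rfl fun i _ => by rw [Module.Basis.span_apply]
    calc ‖f₀ z‖ = |∑ i ∈ F.support, F i * K| := by rw [hfz, Real.norm_eq_abs]
      _ ≤ ∑ i ∈ F.support, |F i * K| := Finset.abs_sum_le_sum_abs _ _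
      _ = K * ∑ i ∈ F.support, |F i| := by
          rw [Finset.mul_sum]
          exact Finset.sum_congr rfl fun i _ => by
            rw [abs_mul, abs_of_pos hK, mul_comm]
      _ ≤ ‖∑ i ∈ F.support, F i • v i‖ := key _ _
      _ = ‖(z : X)‖ := by rw [← hcz]
      _ = 1 * ‖z‖ := by rw [one_mul]; rfl
  let f : p →L[ℝ] ℝ := f₀.mkContinuous 1 hbound
  obtain ⟨g, hg_eq, hg_norm⟩ := exists_extension_norm_eq p f
  refine ⟨g, ?_, ?_⟩
  · rw [hg_norm]
    exact f₀.mkContinuous_norm_le zero_le_one hbound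
  · intro k
    have hmem : v k ∈ p := Submodule.subset_span (Set.mem_range_self k)
    have h1 : g (v k) = f ⟨v k, hmem⟩ := hg_eq ⟨v k, hmem⟩
    have hBk : (⟨v k, hmem⟩ : p) = B k := by
      apply Subtype.ext
      rw [Module.Basis.span_apply]
    rw [h1, hBk]
    show f₀ (B k) = K
    rw [Module.Basis.constr_basis]

set_option maxHeartbeats 1600000

/-- If a real Banach space has the `c`-strong Schur property, then it is
`(2c+1)`-Schur. -/
theorem isCSchur_of_hasCStrongSchur
    (X : Type*) [NormedAddCommGroup X] [NormedSpace ℝ X] [CompleteSpace X]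
    (c : ℝ) (hc : 1 ≤ c) (h : HasCStrongSchur X c) :
    IsCSchur X (2 * c + 1) := by
  rintro x ⟨M, hM⟩
  by_contra hcon
  push_neg at hcon
  set a := caSeq x with ha_def
  set d := deSeq x with hd_def
  have hM0 : 0 ≤ M := le_trans (norm_nonneg _) (hM 0)
  have hcpos : 0 < c := by linarith
  have hbdd : ∀ n : ℕ, Bornology.IsBounded (x '' Set.Ici n) := by
    intro n
    apply (Metric.isBounded_closedBall (x := (0:X)) (r := M)).subset
    rintro _ ⟨k, _, rfl⟩
    exact Metric.mem_closedBall.mpr (by rw [dist_zero_right]; exact hM k)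
  have hbb : BddBelow {s : ℝ | ∃ n : ℕ, s = Metric.diam (x '' Set.Ici n)} := by
    refine ⟨0, ?_⟩; rintro s ⟨n, rfl⟩; exact Metric.diam_nonneg
  have ha_le : ∀ n : ℕ, a ≤ Metric.diam (x '' Set.Ici n) := fun n => csInf_le hbb ⟨n, rfl⟩
  have ha0 : 0 ≤ a := Real.sInf_nonneg (by rintro s ⟨n, rfl⟩; exact Metric.diam_nonneg)
  have hSub : ∀ φ : X →L[ℝ] ℝ, ‖φ‖ ≤ 1 → ∀ k l : ℕ, |φ (x k) - φ (x l)| ≤ 2 * M := by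
    intro φ hφ k l
    have h1 : |φ (x k) - φ (x l)| ≤ ‖x k - x l‖ := by
      rw [← map_sub, ← Real.norm_eq_abs]
      calc ‖φ (x k - x l)‖ ≤ ‖φ‖ * ‖x k - x l‖ := φ.le_opNorm _
        _ ≤ 1 * ‖x k - x l‖ := mul_le_mul_of_nonneg_right hφ (norm_nonneg _)
        _ = ‖x k - x l‖ := one_mul _
    calc |φ (x k) - φ (x l)| ≤ ‖x k - x l‖ := h1
      _ ≤ ‖x k‖ + ‖x l‖ := norm_sub_le _ _
      _ ≤ 2 * M := by linarith [hM k, hM l]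
  have hSbdd : ∀ (φ : X →L[ℝ] ℝ), ‖φ‖ ≤ 1 → ∀ n : ℕ,
      BddAbove {u : ℝ | ∃ k, n ≤ k ∧ ∃ l, n ≤ l ∧ u = |φ (x k) - φ (x l)|} := by
    intro φ hφ n
    refine ⟨2 * M, ?_⟩
    rintro u ⟨k, hk, l, hl, rfl⟩
    exact hSub φ hφ k l
  have hTbdd : ∀ (φ : X →L[ℝ] ℝ), ‖φ‖ ≤ 1 →
      BddBelow {s : ℝ | ∃ n : ℕ,
        s = sSup {u : ℝ | ∃ k, n ≤ k ∧ ∃ l, n ≤ l ∧ u = |φ (x k) - φ (x l)|}} := by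
    intro φ hφ
    refine ⟨0, ?_⟩
    rintro s ⟨n, rfl⟩
    exact le_csSup (hSbdd φ hφ n) ⟨n, le_rfl, n, le_rfl, by simp⟩
  have hDbdd : BddAbove {t : ℝ | ∃ φ : X →L[ℝ] ℝ, ‖φ‖ ≤ 1 ∧ t = caSeqR fun n => φ (x n)} := by
    refine ⟨2 * M, ?_⟩
    rintro tt ⟨φ, hφ, rfl⟩
    simp only [caSeqR]
    have hmem : sSup {u : ℝ | ∃ k, 0 ≤ k ∧ ∃ l, 0 ≤ l ∧ u = |φ (x k) - φ (x l)|} ∈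
        {s : ℝ | ∃ n : ℕ, s = sSup {u : ℝ | ∃ k, n ≤ k ∧ ∃ l, n ≤ l ∧ u = |φ (x k) - φ (x l)|}} :=
      ⟨0, rfl⟩
    refine csInf_le_of_le (hTbdd φ hφ) hmem ?_
    apply Real.sSup_le ?_ (by linarith)
    rintro u ⟨k, _, l, _, rfl⟩
    exact hSub φ hφ k l
  have hd0 : 0 ≤ d := by
    apply Real.sSup_nonneg
    rintro t ⟨φ, hφ, rfl⟩
    apply Real.sInf_nonneg
    rintro s ⟨n, rfl⟩
    exact le_csSup (hSbdd φ hφ n) ⟨n, le_rfl, n, le_rfl, by simp⟩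
  have hφle : ∀ φ : X →L[ℝ] ℝ, ‖φ‖ ≤ 1 → caSeqR (fun n => φ (x n)) ≤ d :=
    fun φ hφ => le_csSup hDbdd ⟨φ, hφ, rfl⟩
  have ha_pos : 0 < a :=
    lt_of_le_of_lt (mul_nonneg (by linarith) hd0) hcon
  -- choose ε
  obtain ⟨ε, hε0, hε4, hcondA, hcondB⟩ :
      ∃ ε : ℝ, 0 < ε ∧ ε < a / 4 ∧
        d + 2 * c * (d + ε) * (a + ε) / (a - 2 * ε) + 4 * ε < a ∧
        (d + ε) * (c + ε) + ε < a := by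
    have hane : a - 2 * (0:ℝ) ≠ 0 := by simpa using ne_of_gt ha_pos
    have hF1 : ContinuousAt (fun ε : ℝ => d + 2 * c * (d + ε) * (a + ε) / (a - 2 * ε) + 4 * ε) 0 := by
      apply ContinuousAt.add
      apply ContinuousAt.add continuousAt_const
      · exact ContinuousAt.div (by fun_prop) (by fun_prop) hane
      · fun_prop
    have hF1v : d + 2 * c * (d + 0) * (a + 0) / (a - 2 * 0) + 4 * 0 < a := by
      have he : 2 * c * (d + 0) * (a + 0) / (a - 2 * 0) = 2 * c * d := by
        field_simp
        ring
      rw [he]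
      nlinarith [hcon]
    have hF2 : ContinuousAt (fun ε : ℝ => (d + ε) * (c + ε) + ε) 0 := by fun_prop
    have hF2v : (d + 0) * (c + 0) + 0 < a := by
      nlinarith [hcon, hd0, hc]
    have e1 := hF1.tendsto.eventually_lt_const hF1v
    have e2 := hF2.tendsto.eventually_lt_const hF2v
    have e3 : ∀ᶠ ε : ℝ in nhds 0, ε < a / 4 :=
      Filter.Tendsto.eventually_lt_const (by linarith) tendsto_id
    have e4 := ((e1.and (e2.and e3)).filter_mono (nhdsWithin_le_nhds (s := Set.Ioi (0:ℝ)))).and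
      eventually_mem_nhdsWithin
    obtain ⟨ε, ⟨h1, h2, h3⟩, h4⟩ := e4.exists
    exact ⟨ε, h4, h3, h1, h2⟩
  set ε₂ := ε / (d + 1 + ε) with hε₂def
  have hdε : 0 < d + ε := by linarith
  have hε₂0 : 0 < ε₂ := div_pos hε0 (by linarith)
  have hε₂ε : ε₂ ≤ ε := by
    rw [hε₂def]
    apply div_le_self hε0.le
    linarith
  have hε₂lt : (d + ε) * ε₂ < ε := by
    rw [hε₂def, ← mul_div_assoc, div_lt_iff₀ (by linarith : (0:ℝ) < d + 1 + ε)]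
    nlinarith
  set t' := 2 * c * (d + ε) * (a + ε) / (a - 2 * ε) with ht'def
  have haε : 0 < a + ε := by linarith
  have ha2ε : 0 < a - 2 * ε := by linarith
  have ht'pos : 0 < t' := by
    rw [ht'def]
    exact div_pos (mul_pos (mul_pos (by linarith) hdε) haε) ha2ε
  set t := t' + 2 * ε with htdef
  -- hphi
  have hphi : ∀ φ : X →L[ℝ] ℝ, ‖φ‖ ≤ 1 →
      ∃ n₁ : ℕ, ∀ k, n₁ ≤ k → ∀ l, n₁ ≤ l → |φ (x k) - φ (x l)| < d + ε := by
    intro φ hφ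
    have hlt : caSeqR (fun n => φ (x n)) < d + ε := by
      have := hφle φ hφ; linarith
    simp only [caSeqR] at hlt
    obtain ⟨s, ⟨n₁, rfl⟩, hs⟩ := (csInf_lt_iff (hTbdd φ hφ) ⟨_, 0, rfl⟩).mp hlt
    exact ⟨n₁, fun k hk l hl => lt_of_le_of_lt (le_csSup (hSbdd φ hφ n₁) ⟨k, hk, l, hl, rfl⟩) hs⟩
  -- choose J
  obtain ⟨J, hJ⟩ : ∃ J : ℕ, Metric.diam (x '' Set.Ici J) < a + ε := by
    have hlt : caSeq x < a + ε := by rw [← ha_def]; linarith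
    rw [caSeq] at hlt
    obtain ⟨s, ⟨J, rfl⟩, hs⟩ := (csInf_lt_iff hbb ⟨_, 0, rfl⟩).mp hlt
    exact ⟨J, hs⟩
  have haεle : 0 ≤ a - ε := by linarith
  -- choose the difference sequence
  have hsepn : ∀ n : ℕ, ∃ p q : ℕ, n + J ≤ p ∧ n + J ≤ q ∧ a - ε < ‖x p - x q‖ := by
    intro n
    by_contra hctr
    push_neg at hctr
    have hle : Metric.diam (x '' Set.Ici (n + J)) ≤ a - ε := by
      apply Metric.diam_le_of_forall_dist_le haεle
      rintro _ ⟨p, hp, rfl⟩ _ ⟨q, hq, rfl⟩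
      rw [dist_eq_norm]
      exact hctr p q hp hq
    linarith [ha_le (n + J)]
  choose p q hp hq hpq using hsepn
  set Y := fun n => x (p n) - x (q n) with hYdef
  have hYub : ∀ n, ‖Y n‖ < a + ε := by
    intro n
    have h1 : dist (x (p n)) (x (q n)) ≤ Metric.diam (x '' Set.Ici J) :=
      Metric.dist_le_diam_of_mem (hbdd J)
        ⟨p n, le_trans (Nat.le_add_left J n) (hp n), rfl⟩
        ⟨q n, le_trans (Nat.le_add_left J n) (hq n), rfl⟩
    rw [dist_eq_norm] at h1
    exact lt_of_le_of_lt h1 hJ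
  have hYlb : ∀ n, a - ε < ‖Y n‖ := hpq
  have hYpos : ∀ n, 0 < ‖Y n‖ := fun n => lt_of_le_of_lt haεle (hYlb n)
  have hYne : ∀ n, Y n ≠ 0 := fun n => norm_pos_iff.mp (hYpos n)
  have hφY : ∀ φ : X →L[ℝ] ℝ, ‖φ‖ ≤ 1 → ∃ n₁ : ℕ, ∀ n, n₁ ≤ n → |φ (Y n)| < d + ε := by
    intro φ hφ
    obtain ⟨n₁, hn₁⟩ := hphi φ hφ
    refine ⟨n₁, fun n hn => ?_⟩
    have hpn : n₁ ≤ p n := le_trans hn (le_trans (Nat.le_add_right n J) (hp n))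
    have hqn : n₁ ≤ q n := le_trans hn (le_trans (Nat.le_add_right n J) (hq n))
    have hval := hn₁ (p n) hpn (q n) hqn
    show |φ (x (p n) - x (q n))| < d + ε
    rw [map_sub]
    exact hval
  by_cases hAB : ∃ i, ∀ N, ∃ j, N ≤ j ∧ ‖Y i - Y j‖ ≤ t
  · -- case A
    obtain ⟨i, hi⟩ := hAB
    obtain ⟨φ, hφ1, hφi⟩ := exists_dual_vector ℝ (Y i) (norm_ne_zero_iff.mpr (hYne i))
    obtain ⟨n₁, hn₁⟩ := hφY φ hφ1.le
    obtain ⟨j, hj, hjt⟩ := hi n₁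
    have h2 : |φ (Y i) - φ (Y j)| ≤ ‖Y i - Y j‖ := by
      rw [← map_sub, ← Real.norm_eq_abs]
      calc ‖φ (Y i - Y j)‖ ≤ ‖φ‖ * ‖Y i - Y j‖ := φ.le_opNorm _
        _ = ‖Y i - Y j‖ := by rw [hφ1, one_mul]
    have h3 := hn₁ j hj
    have h4 : a - ε < φ (Y i) := by rw [hφi]; exact hYlb i
    have e1 : φ (Y j) ≤ |φ (Y j)| := le_abs_self _
    have e2 : φ (Y i) - φ (Y j) ≤ |φ (Y i) - φ (Y j)| := le_abs_self _
    linarith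
  · push_neg at hAB
    choose N hN using hAB
    -- greedy extraction of a t-separated subsequence
    set m : ℕ → ℕ := fun k =>
      Nat.rec 0 (fun _ mk => max (mk + 1) ((Finset.range (mk + 1)).sup N)) k with hmdef
    have hm_succ : ∀ k, m (k + 1) = max (m k + 1) ((Finset.range (m k + 1)).sup N) :=
      fun k => rfl
    have hm_mono : StrictMono m := by
      apply strictMono_nat_of_lt_succ
      intro k
      rw [hm_succ]
      exact lt_of_lt_of_le (Nat.lt_succ_self _) (le_max_left _ _)
    have hm_sep : ∀ i j, i < j → t < ‖Y (m i) - Y (m j)‖ := by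
      intro i j hij
      apply hN (m i)
      have h1 : N (m i) ≤ (Finset.range (m i + 1)).sup N :=
        Finset.le_sup (Finset.mem_range.mpr (Nat.lt_succ_self _))
      have h2 : (Finset.range (m i + 1)).sup N ≤ m (i + 1) := by
        rw [hm_succ]; exact le_max_right _ _
      exact le_trans h1 (le_trans h2 (hm_mono.monotone (Nat.succ_le_of_lt hij)))
    set u : ℕ → X := fun k => ‖Y (m k)‖⁻¹ • Y (m k) with hudef
    have hu1 : ∀ k, ‖u k‖ = 1 := by
      intro k
      show ‖‖Y (m k)‖⁻¹ • Y (m k)‖ = 1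
      rw [norm_smul, norm_inv, norm_norm, inv_mul_cancel₀ (ne_of_gt (hYpos (m k)))]
    set δ := min (t' / (a + ε)) 2 with hδdef
    have hδ0 : 0 < δ := lt_min (div_pos ht'pos haε) two_pos
    have hδ2 : δ ≤ 2 := min_le_right _ _
    have hkey : ∀ i j, i < j → t' / (a + ε) ≤ ‖u i - u j‖ := by
      intro i j hij
      have hsep := hm_sep i j hij
      have hri : 0 < ‖Y (m i)‖ := hYpos _
      have hrj : 0 < ‖Y (m j)‖ := hYpos _
      have e1 : ‖Y (m i)‖ • u i = Y (m i) := smul_inv_smul₀ (ne_of_gt hri) _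
      have e2 : ‖Y (m j)‖ • u j = Y (m j) := smul_inv_smul₀ (ne_of_gt hrj) _
      have hid : Y (m i) - Y (m j) =
          ‖Y (m i)‖ • (u i - u j) + (‖Y (m i)‖ - ‖Y (m j)‖) • u j := by
        rw [smul_sub, sub_smul, e1, e2]
        abel
      have hnorm1 : ‖Y (m i) - Y (m j)‖ ≤
          ‖Y (m i)‖ * ‖u i - u j‖ + |‖Y (m i)‖ - ‖Y (m j)‖| := by
        calc ‖Y (m i) - Y (m j)‖
            = ‖‖Y (m i)‖ • (u i - u j) + (‖Y (m i)‖ - ‖Y (m j)‖) • u j‖ := by rw [← hid]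
          _ ≤ ‖‖Y (m i)‖ • (u i - u j)‖ + ‖(‖Y (m i)‖ - ‖Y (m j)‖) • u j‖ := norm_add_le _ _
          _ = ‖Y (m i)‖ * ‖u i - u j‖ + |‖Y (m i)‖ - ‖Y (m j)‖| * ‖u j‖ := by
              rw [norm_smul, norm_smul, Real.norm_eq_abs, Real.norm_eq_abs,
                abs_of_pos hri]
          _ = ‖Y (m i)‖ * ‖u i - u j‖ + |‖Y (m i)‖ - ‖Y (m j)‖| := by rw [hu1, mul_one]
      have habs : |‖Y (m i)‖ - ‖Y (m j)‖| < 2 * ε := by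
        rw [abs_lt]
        constructor
        · linarith [hYlb (m i), hYub (m j)]
        · linarith [hYub (m i), hYlb (m j)]
      have hmul : ‖Y (m i)‖ * ‖u i - u j‖ ≤ (a + ε) * ‖u i - u j‖ :=
        mul_le_mul_of_nonneg_right (hYub (m i)).le (norm_nonneg _)
      rw [div_le_iff₀ haε]
      nlinarith [hsep, hnorm1, habs, hmul]
    have husep : ∀ i j, i ≠ j → δ ≤ ‖u i - u j‖ := by
      intro i j hij
      rcases hij.lt_or_gt with hlt | hlt
      · exact le_trans (min_le_left _ _) (hkey i j hlt)
      · rw [norm_sub_rev]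
        exact le_trans (min_le_left _ _) (hkey j i hlt)
    obtain ⟨nn, hnn_mono, hl1⟩ := h δ hδ0 hδ2 ε₂ hε₂0 u hu1 husep
    set K := (2 * c / δ + ε₂)⁻¹ with hKdef
    have hPpos : 0 < 2 * c / δ + ε₂ := add_pos (div_pos (by linarith) hδ0) hε₂0
    have hK0 : 0 < K := inv_pos.mpr hPpos
    obtain ⟨g, hgnorm, hgval⟩ := exists_functional (fun k => u (nn k)) K hK0 hl1
    obtain ⟨n₁, hn₁⟩ := hφY g hgnorm
    have hj0 : n₁ ≤ m (nn n₁) := le_trans (hnn_mono.id_le n₁) (hm_mono.id_le (nn n₁))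
    have hval := hn₁ (m (nn n₁)) hj0
    have hYj0 : Y (m (nn n₁)) = ‖Y (m (nn n₁))‖ • u (nn n₁) :=
      (smul_inv_smul₀ (ne_of_gt (hYpos (m (nn n₁)))) _).symm
    have hgY : g (Y (m (nn n₁))) = ‖Y (m (nn n₁))‖ * K := by
      conv_lhs => rw [hYj0]
      rw [map_smul, hgval n₁]
      rfl
    have hfin : (a - ε) * K < d + ε := by
      have h5 : (a - ε) * K ≤ ‖Y (m (nn n₁))‖ * K :=
        mul_le_mul_of_nonneg_right (hYlb (m (nn n₁))).le hK0.le
      have h6 : ‖Y (m (nn n₁))‖ * K ≤ |g (Y (m (nn n₁)))| := by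
        rw [hgY]; exact le_abs_self _
      linarith
    have hmain : a - ε < (d + ε) * (2 * c / δ + ε₂) := by
      have hKP : K * (2 * c / δ + ε₂) = 1 := inv_mul_cancel₀ (ne_of_gt hPpos)
      calc a - ε = (a - ε) * (K * (2 * c / δ + ε₂)) := by rw [hKP, mul_one]
        _ = (a - ε) * K * (2 * c / δ + ε₂) := by ring
        _ < (d + ε) * (2 * c / δ + ε₂) := mul_lt_mul_of_pos_right hfin hPpos
    rcases le_or_gt (t' / (a + ε)) 2 with hle | hlt2
    · have hδeq : δ = t' / (a + ε) := min_eq_left hle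
      have hcalc : (d + ε) * (2 * c / (t' / (a + ε))) = a - 2 * ε := by
        rw [ht'def]
        field_simp
      rw [hδeq] at hmain
      have hstep : a - ε < (a - 2 * ε) + (d + ε) * ε₂ := by
        calc a - ε < (d + ε) * (2 * c / (t' / (a + ε)) + ε₂) := hmain
          _ = (d + ε) * (2 * c / (t' / (a + ε))) + (d + ε) * ε₂ := by ring
          _ = (a - 2 * ε) + (d + ε) * ε₂ := by rw [hcalc]
      linarith
    · have hδeq : δ = 2 := min_eq_right hlt2.le
      rw [hδeq] at hmain
      have h7 : (d + ε) * (2 * c / 2 + ε₂) ≤ (d + ε) * (c + ε) := by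
        apply mul_le_mul_of_nonneg_left _ hdε.le
        have he : 2 * c / 2 = c := by ring
        rw [he]
        linarith
      linarith
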